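/- If a² > 0 and β = a w with δ = η_w a² - η_a‖w‖², then a² = (√(δ² + 4 η_a η_w ‖β‖²) + δ)/(2η_w) and w wᵀ = ((√(δ² + 4 η_a η_w ‖β‖²) - δ)/(2η_a)) · (β βᵀ / ‖β‖²). -/

import Mathlib

/-- Recovering a² and w wᵀ from β = a w and δ. -/
theorem recover_a_sq_and_outer (d : ℕ) (a : ℝ) (ha : a ≠ 0)
    (w : EuclideanSpace ℝ (Fin d)) (hw : w ≠ 0)
    (ηa ηw δ : ℝ) (hηa : 0 < ηa) (hηw : 0 < ηw)
    (β : EuclideanSpace ℝ (Fin d)) (hβ : β = a • w)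
    (hδ : δ = ηw * a^2 - ηa * ‖w‖^2) :
    a^2 = (Real.sqrt (δ^2 + 4*ηa*ηw*‖β‖^2) + δ) / (2*ηw) ∧
    Matrix.vecMulVec (fun i => w i) (fun i => w i)
      = (((Real.sqrt (δ^2 + 4*ηa*ηw*‖β‖^2) - δ) / (2*ηa)) / ‖β‖^2) •
        Matrix.vecMulVec (fun i => β i) (fun i => β i) := by
  have ha2 : (0:ℝ) < a^2 := by positivity
  have hwn : (0:ℝ) < ‖w‖^2 := by
    have : ‖w‖ ≠ 0 := norm_ne_zero_iff.mpr hw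
    positivity
  have hβn : ‖β‖^2 = a^2 * ‖w‖^2 := by
    rw [hβ, norm_smul]
    simp [mul_pow, sq_abs]
  have hkey : δ^2 + 4*ηa*ηw*‖β‖^2 = (ηw*a^2 + ηa*‖w‖^2)^2 := by
    rw [hδ, hβn]; ring
  have hS : Real.sqrt (δ^2 + 4*ηa*ηw*‖β‖^2) = ηw*a^2 + ηa*‖w‖^2 := by
    rw [hkey]
    exact Real.sqrt_sq (by positivity)
  constructor
  · rw [hS, hδ]
    field_simp
    ring
  · have hc : ((Real.sqrt (δ^2 + 4*ηa*ηw*‖β‖^2) - δ) / (2*ηa)) / ‖β‖^2 = 1 / a^2 := by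
      rw [hS, hδ, hβn]
      field_simp
      ring
    rw [hc]
    funext i j
    simp only [Matrix.vecMulVec_apply, Matrix.smul_apply, smul_eq_mul, hβ]
    have : (a • w) i = a * w i := rfl
    rw [this]
    have : (a • w) j = a * w j := rfl
    rw [this]
    field_simp
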